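/- Let R be a Z-graded ring. If every nonzero graded ideal I of R satisfies I² ≠ 0, then R is semiprime. -/

import Mathlib

open DirectSum

/-- If every nonzero graded two-sided ideal `I` of a `ℤ`-graded ring satisfies
`I² ≠ 0`, then the ring is semiprime (`I² = 0` implies `I = 0` for all
two-sided ideals `I`). -/
theorem stmt10 {R : Type*} [Ring R] (𝒜 : ℤ → AddSubgroup R) [GradedRing 𝒜]
    (h : ∀ I : TwoSidedIdeal R,
      (∀ x ∈ I, ∀ n : ℤ, (DirectSum.decompose 𝒜 x n : R) ∈ I) →
      I ≠ ⊥ → ¬ (∀ a ∈ I, ∀ b ∈ I, a * b = 0)) :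
    ∀ I : TwoSidedIdeal R, (∀ a ∈ I, ∀ b ∈ I, a * b = 0) → I = ⊥ := by
  classical
  intro I hI2
  by_contra hne
  obtain ⟨a, haI, ha0⟩ : ∃ a, a ∈ I ∧ a ≠ 0 := by
    by_contra hcon
    push_neg at hcon
    refine hne ?_
    ext x
    simp only [TwoSidedIdeal.mem_bot]
    exact ⟨fun hx => hcon x hx, fun hx => hx ▸ I.zero_mem⟩
  -- the `n`-th homogeneous component, as an additive monoid hom
  set f : ℤ → R →+ R := fun n =>
    (𝒜 n).subtype.comp ((DFinsupp.evalAddMonoidHom n).comp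
      (decomposeAddEquiv 𝒜).toAddMonoidHom) with hf
  have hfeq : ∀ (n : ℤ) (x : R), f n x = (DirectSum.decompose 𝒜 x n : R) := fun n x => rfl
  have hS : (DirectSum.decompose 𝒜 a).support.Nonempty := by
    rw [Finset.nonempty_iff_ne_empty, Ne, DFinsupp.support_eq_empty]
    intro hz
    apply ha0
    have := congrArg (DirectSum.decompose 𝒜).symm hz
    simpa using this
  set S := (DirectSum.decompose 𝒜 a).support with hSdef
  set d := S.max' hS with hd
  set c : R := (DirectSum.decompose 𝒜 a d : R) with hcdef
  have hcd : c ∈ 𝒜 d := (DirectSum.decompose 𝒜 a d).2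
  have hc0 : c ≠ 0 := fun hc =>
    (DFinsupp.mem_support_iff.1 (S.max'_mem hS)) (ZeroMemClass.coe_eq_zero.mp hc)
  -- key step A: for homogeneous x, c * x * c = 0
  have keyA : ∀ k : ℤ, ∀ x ∈ 𝒜 k, c * x * c = 0 := by
    intro k x hx
    have haxa : a * x * a = 0 := by
      have := hI2 a haI (x * a) (I.mul_mem_left x a haI)
      rwa [← mul_assoc] at this
    have h0 : f (d + k + d) (a * x * a) = 0 := by rw [haxa]; simp
    have expand : a * x * a = ∑ i ∈ S, ∑ j ∈ S,
        (DirectSum.decompose 𝒜 a i : R) * x * (DirectSum.decompose 𝒜 a j : R) := by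
      conv_lhs => rw [← DirectSum.sum_support_decompose 𝒜 a]
      simp only [Finset.sum_mul, Finset.mul_sum]
      rw [Finset.sum_comm]
    rw [expand, map_sum] at h0
    simp only [map_sum] at h0
    have hterm : ∀ i ∈ S, ∀ j ∈ S,
        f (d + k + d) ((DirectSum.decompose 𝒜 a i : R) * x * (DirectSum.decompose 𝒜 a j : R))
          = if i = d then (if j = d then c * x * c else 0) else 0 := by
      intro i hi j hj
      have hmem : (DirectSum.decompose 𝒜 a i : R) * x * (DirectSum.decompose 𝒜 a j : R)
          ∈ 𝒜 (i + k + j) :=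
        SetLike.mul_mem_graded
          (SetLike.mul_mem_graded (DirectSum.decompose 𝒜 a i).2 hx)
          (DirectSum.decompose 𝒜 a j).2
      have hi' : i ≤ d := S.le_max' i hi
      have hj' : j ≤ d := S.le_max' j hj
      by_cases h1 : i = d
      · by_cases h2 : j = d
        · subst h1; subst h2
          rw [if_pos rfl, if_pos rfl, hfeq]
          exact DirectSum.decompose_of_mem_same 𝒜 hmem
        · rw [if_pos h1, if_neg h2, hfeq]
          exact DirectSum.decompose_of_mem_ne 𝒜 hmem (by omega)
      · rw [if_neg h1, hfeq]
        exact DirectSum.decompose_of_mem_ne 𝒜 hmem (by omega)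
    rw [Finset.sum_congr rfl (fun i hi =>
      Finset.sum_congr rfl (fun j hj => hterm i hi j hj))] at h0
    have hdS : d ∈ S := S.max'_mem hS
    simpa [Finset.sum_ite_eq', hdS] using h0
  -- key step B: for all x, c * x * c = 0
  have keyB : ∀ x : R, c * x * c = 0 := by
    intro x
    conv_lhs => rw [← DirectSum.sum_support_decompose 𝒜 x]
    rw [Finset.mul_sum, Finset.sum_mul]
    exact Finset.sum_eq_zero fun k _ => keyA k _ (DirectSum.decompose 𝒜 x k).2
  -- the graded ideal generated by c
  set T : Set R := {y | ∃ r s : R, y = r * c * s} with hT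
  have mulL : ∀ x y : R, y ∈ AddSubgroup.closure T → x * y ∈ AddSubgroup.closure T := by
    intro x y hy
    induction hy using AddSubgroup.closure_induction with
    | mem z hz =>
      obtain ⟨r, s, rfl⟩ := hz
      exact AddSubgroup.subset_closure ⟨x * r, s, by rw [mul_assoc, mul_assoc, mul_assoc]⟩
    | zero => simpa using (AddSubgroup.closure T).zero_mem
    | add p q _ _ hp hq => rw [mul_add]; exact add_mem hp hq
    | neg p _ hp => rw [mul_neg]; exact neg_mem hp
  have mulR : ∀ x y : R, x ∈ AddSubgroup.closure T → x * y ∈ AddSubgroup.closure T := by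
    intro x y hx
    induction hx using AddSubgroup.closure_induction with
    | mem z hz =>
      obtain ⟨r, s, rfl⟩ := hz
      exact AddSubgroup.subset_closure ⟨r, s * y, by rw [mul_assoc, mul_assoc]⟩
    | zero => simpa using (AddSubgroup.closure T).zero_mem
    | add p q _ _ hp hq => rw [add_mul]; exact add_mem hp hq
    | neg p _ hp => rw [neg_mul]; exact neg_mem hp
  set J : TwoSidedIdeal R := TwoSidedIdeal.mk' (AddSubgroup.closure T)
    (AddSubgroup.closure T).zero_mem
    (fun hx hy => add_mem hx hy)
    (fun hx => neg_mem hx)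
    (fun {x y} hy => mulL x y hy)
    (fun {x y} hx => mulR x y hx) with hJ
  have memJ : ∀ x : R, x ∈ J ↔ x ∈ AddSubgroup.closure T := fun x =>
    TwoSidedIdeal.mem_mk' _ _ _ _ _ _ x
  -- J is graded
  have Jgraded : ∀ x ∈ J, ∀ n : ℤ, (DirectSum.decompose 𝒜 x n : R) ∈ J := by
    intro x hx n
    rw [memJ] at hx ⊢
    rw [← hfeq]
    induction hx using AddSubgroup.closure_induction with
    | mem z hz =>
      obtain ⟨r, s, rfl⟩ := hz
      have expand : r * c * s = ∑ i ∈ (DirectSum.decompose 𝒜 r).support,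
          ∑ j ∈ (DirectSum.decompose 𝒜 s).support,
          (DirectSum.decompose 𝒜 r i : R) * c * (DirectSum.decompose 𝒜 s j : R) := by
        conv_lhs => rw [← DirectSum.sum_support_decompose 𝒜 r,
          ← DirectSum.sum_support_decompose 𝒜 s]
        simp only [Finset.sum_mul, Finset.mul_sum]
        rw [Finset.sum_comm]
      rw [expand, map_sum]
      refine AddSubgroup.sum_mem _ fun i _ => ?_
      rw [map_sum]
      refine AddSubgroup.sum_mem _ fun j _ => ?_
      have hmem : (DirectSum.decompose 𝒜 r i : R) * c * (DirectSum.decompose 𝒜 s j : R)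
          ∈ 𝒜 (i + d + j) :=
        SetLike.mul_mem_graded
          (SetLike.mul_mem_graded (DirectSum.decompose 𝒜 r i).2 hcd)
          (DirectSum.decompose 𝒜 s j).2
      by_cases hn : i + d + j = n
      · have heq := DirectSum.decompose_of_mem_same 𝒜 (show _ ∈ 𝒜 n from hn ▸ hmem)
        rw [hfeq, heq]
        exact AddSubgroup.subset_closure ⟨_, _, rfl⟩
      · rw [hfeq, DirectSum.decompose_of_mem_ne 𝒜 hmem hn]
        exact (AddSubgroup.closure T).zero_mem
    | zero => simpa using (AddSubgroup.closure T).zero_mem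
    | add p q _ _ hp hq => rw [map_add]; exact add_mem hp hq
    | neg p _ hp => rw [map_neg]; exact neg_mem hp
  -- J ≠ ⊥
  have hcJ : c ∈ J := (memJ c).mpr (AddSubgroup.subset_closure ⟨1, 1, by simp⟩)
  have Jne : J ≠ ⊥ := by
    intro hbot
    rw [hbot, TwoSidedIdeal.mem_bot] at hcJ
    exact hc0 hcJ
  -- J squares to zero
  have Jsq : ∀ u ∈ AddSubgroup.closure T, ∀ v ∈ AddSubgroup.closure T, u * v = 0 := by
    intro u hu
    induction hu using AddSubgroup.closure_induction with
    | mem z hz =>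
      intro v hv
      induction hv using AddSubgroup.closure_induction with
      | mem w hw =>
        obtain ⟨r, s, rfl⟩ := hz
        obtain ⟨r', s', rfl⟩ := hw
        have heq : r * c * s * (r' * c * s') = r * (c * (s * r') * c) * s' := by
          noncomm_ring
        rw [heq, keyB, mul_zero, zero_mul]
      | zero => simp
      | add p q _ _ ihp ihq => rw [mul_add, ihp, ihq, add_zero]
      | neg p _ ihp => rw [mul_neg, ihp, neg_zero]
    | zero => intro v _; simp
    | add p q _ _ ihp ihq =>
      intro v hv
      rw [add_mul, ihp v hv, ihq v hv, add_zero]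
    | neg p _ ihp =>
      intro v hv
      rw [neg_mul, ihp v hv, neg_zero]
  exact h J Jgraded Jne fun u hu v hv => Jsq u ((memJ u).1 hu) v ((memJ v).1 hv)
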